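/- Let q : ℕ^{n₁} → P be a surjective homomorphism of commutative monoids with P fine saturated and sharp, and suppose P possesses m irreducible elements. Then for each irreducible element α of P there is a (not necessarily unique) injective monoid homomorphism ℕ → P sending 1 to α, and these homomorphisms jointly generate: the induced homomorphism ℕ^m → P, sending the i-th generator to the i-th irreducible element, is surjective. -/

import Mathlib

/-- Saturated, expressed intrinsically for a cancellative commutative monoid. -/
def IsSaturatedAddMonoid (P : Type*) [AddCommMonoid P] : Prop :=
  ∀ a b : P, (∃ n : ℕ, 1 ≤ n ∧ ∃ c : P, n • a = n • b + c) → ∃ d : P, a = b + d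

/-- `P` is *sharp* if its only unit is `0`. -/
def IsSharpAddMonoid (P : Type*) [AddCommMonoid P] : Prop :=
  ∀ p q : P, p + q = 0 → p = 0

/-- `p` is irreducible: nonzero, and not a sum of two nonzero elements. -/
def IsIrreducibleElem {P : Type*} [AddCommMonoid P] (p : P) : Prop :=
  p ≠ 0 ∧ ∀ a b : P, p = a + b → a = 0 ∨ b = 0

/-- In a sharp monoid, a positive multiple of a nonzero element is nonzero. -/
lemma smul_ne_zero_of_sharp {P : Type} [AddCommMonoid P] (hsharp : IsSharpAddMonoid P)
    {α : P} (hα : α ≠ 0) {s : ℕ} (hs : s ≠ 0) : s • α ≠ 0 := by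
  obtain ⟨t, rfl⟩ := Nat.exists_eq_succ_of_ne_zero hs
  intro h
  rw [succ_nsmul'] at h
  exact hα (hsharp α (t • α) h)

/-- Strict divisibility is well-founded, given a surjection from `ℕ^{n₁}`. -/
lemma strictDvd_wf {n₁ : ℕ} {P : Type} [AddCancelCommMonoid P] (hsharp : IsSharpAddMonoid P)
    (q : (Fin n₁ → ℕ) →+ P) (hq : Function.Surjective q) :
    WellFounded (fun a b : P => ∃ c, c ≠ 0 ∧ b = a + c) := by
  haveI : IsStrictOrder P (fun a b : P => ∃ c, c ≠ 0 ∧ b = a + c) :=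
    { irrefl := fun a ⟨c, hc, h⟩ => hc (left_eq_add.mp h)
      trans := fun a b c ⟨c1, hc1, h1⟩ ⟨c2, hc2, h2⟩ =>
        ⟨c1 + c2, fun h => hc2 (hsharp c2 c1 (by rwa [add_comm] at h)),
          by rw [h2, h1, add_assoc]⟩ }
  rw [RelEmbedding.wellFounded_iff_isEmpty]
  constructor
  intro f
  choose y hy using fun n => hq (f n)
  obtain ⟨i, j, hij, hle⟩ :=
    (wellQuasiOrdered_le (α := Fin n₁ → ℕ)) y
  -- from the descending sequence: f i = f j + c with c ≠ 0
  obtain ⟨c, hc, hfc⟩ : ∃ c, c ≠ 0 ∧ f i = f j + c := f.map_rel_iff.2 hij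
  -- from the lifts: f j = f i + q (y j - y i)
  have hsub : y j = y i + (y j - y i) := by
    funext k; simp [Nat.add_sub_cancel' (hle k)]
  have h2 : f j = f i + q (y j - y i) := by
    rw [← hy i, ← map_add, ← hsub, hy j]
  have key : f i = f i + (q (y j - y i) + c) := by
    rw [← add_assoc, ← h2, hfc]
  have h0 : q (y j - y i) + c = 0 := (left_eq_add.mp key)
  exact hc (hsharp c _ (by rwa [add_comm] at h0))

theorem irreducibles_give_surjection (n₁ : ℕ) (P : Type) [AddCancelCommMonoid P]
    (hfg : AddMonoid.FG P) (hsat : IsSaturatedAddMonoid P) (hsharp : IsSharpAddMonoid P)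
    (q : (Fin n₁ → ℕ) →+ P) (hq : Function.Surjective q)
    (m : ℕ) (ir : Fin m ≃ {p : P // IsIrreducibleElem p}) :
    (∀ α : P, IsIrreducibleElem α →
      ∃ f : ℕ →+ P, f 1 = α ∧ Function.Injective f) ∧
    Function.Surjective (fun v : Fin m → ℕ => ∑ i : Fin m, v i • ((ir i : {p : P // IsIrreducibleElem p}) : P)) := by
  constructor
  · intro α hα
    refine ⟨multiplesHom P α, one_nsmul α, ?_⟩
    have key : ∀ a k : ℕ, a • α = (a + k) • α → a = a + k := by
      intro a k hab
      rw [add_nsmul] at hab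
      have hk : k • α = 0 := (left_eq_add.mp hab)
      have : k = 0 := by
        by_contra h
        exact smul_ne_zero_of_sharp hsharp hα.1 h hk
      omega
    intro a b hab
    simp only [multiplesHom_apply] at hab
    rcases le_total a b with h | h
    · obtain ⟨k, rfl⟩ := Nat.exists_eq_add_of_le h
      exact key a k hab
    · obtain ⟨k, rfl⟩ := Nat.exists_eq_add_of_le h
      exact (key b k hab.symm).symm
  · intro p
    induction p using (strictDvd_wf hsharp q hq).induction with
    | _ p ih =>
      by_cases hp : p = 0
      · exact ⟨0, by simp [hp]⟩
      by_cases hirr : IsIrreducibleElem p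
      · refine ⟨Pi.single (ir.symm ⟨p, hirr⟩) 1, ?_⟩
        simp only
        rw [Finset.sum_eq_single (ir.symm ⟨p, hirr⟩)]
        · simp
        · intro i _ hi
          rw [Pi.single_eq_of_ne hi, zero_smul]
        · intro h; exact absurd (Finset.mem_univ _) h
      · have hirr' : ∃ a b : P, p = a + b ∧ a ≠ 0 ∧ b ≠ 0 := by
          simp only [IsIrreducibleElem, not_and, not_forall] at hirr
          obtain ⟨a, b, hab, hn⟩ := hirr hp
          push_neg at hn
          exact ⟨a, b, hab, hn.1, hn.2⟩
        obtain ⟨a, b, hab, ha, hb⟩ := hirr'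
        obtain ⟨v, hv⟩ := ih a ⟨b, hb, hab⟩
        obtain ⟨w, hw⟩ := ih b ⟨a, ha, by rw [hab, add_comm]⟩
        refine ⟨v + w, ?_⟩
        simp only [Pi.add_apply, add_smul, Finset.sum_add_distrib] at *
        rw [hv, hw, hab]
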